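/- The curve x(λ) = (p₁ + p₂λ²)/(λ²+1), y(λ) = p₃^{3/2}(p₁−p₂)³ λ³/(λ²+1)³ − Q(x(λ)) is a parametrization of the sextic (y+Q(x))² + P(x)³ = 0, i.e. for all λ, (y(λ)+Q(x(λ)))² + P(x(λ))³ = 0, where P(x) = p₃(x−p₂)(x−p₁). -/

import Mathlib

/-- The rational parametrization of the cuspidal sextic (y+Q(x))² + P(x)³ = 0. -/
theorem stmt_11 (p1 p2 p3 q0 q1 q2 q3 l : ℝ) (hp3 : 0 < p3) :
    ((Real.sqrt p3 ^ 3 * (p1 - p2) ^ 3 * l ^ 3 / (l ^ 2 + 1) ^ 3 -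
        (q0 + q1 * ((p1 + p2 * l ^ 2) / (l ^ 2 + 1)) +
          q2 * ((p1 + p2 * l ^ 2) / (l ^ 2 + 1)) ^ 2 +
          q3 * ((p1 + p2 * l ^ 2) / (l ^ 2 + 1)) ^ 3)) +
      (q0 + q1 * ((p1 + p2 * l ^ 2) / (l ^ 2 + 1)) +
        q2 * ((p1 + p2 * l ^ 2) / (l ^ 2 + 1)) ^ 2 +
        q3 * ((p1 + p2 * l ^ 2) / (l ^ 2 + 1)) ^ 3)) ^ 2 +
      (p3 * ((p1 + p2 * l ^ 2) / (l ^ 2 + 1) - p2) *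
        ((p1 + p2 * l ^ 2) / (l ^ 2 + 1) - p1)) ^ 3 = 0 := by
  have h : (l ^ 2 + 1) ≠ 0 := by positivity
  have hs : Real.sqrt p3 ^ 2 = p3 := Real.sq_sqrt hp3.le
  rw [sub_add_cancel]
  rw [div_pow, show ((p1 + p2 * l ^ 2) / (l ^ 2 + 1) - p2) = (p1 - p2)/(l^2+1) by field_simp; ring,
    show ((p1 + p2 * l ^ 2) / (l ^ 2 + 1) - p1) = -((p1 - p2) * l^2)/(l^2+1) by field_simp; ring]
  field_simp
  have h6 : Real.sqrt p3 ^ 6 = p3 ^ 3 := by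
    rw [show (6:ℕ)=2*3 from rfl, pow_mul, hs]
  linear_combination ((p1-p2)^6*l^6) * h6
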